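/- Let f : ℝ² → ℝ be a smooth function satisfying f(p+nq, q) = f(p,q) for all n ∈ ℤ and all (p,q) ∈ ℝ². Then for all integers i ≥ 1 and j ≥ 0, the partial derivative ∂^{i+j} f / ∂p^i ∂q^j vanishes at every point (p, 0). -/

import Mathlib

open Set Filter Topology

/-- The `k`-th partial derivative in the first variable, as a function on `ℝ × ℝ`. -/
noncomputable def Dpart (f : ℝ × ℝ → ℝ) (k : ℕ) : ℝ × ℝ → ℝ :=
  fun x => iteratedDeriv k (fun p' : ℝ => f (p', x.2)) x.1

lemma Dpart_deriv (f : ℝ × ℝ → ℝ) (k : ℕ) (q y : ℝ) :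
    deriv (fun y' : ℝ => Dpart f k (y', q)) y = Dpart f (k + 1) (y, q) := by
  simp only [Dpart]
  rw [iteratedDeriv_succ]

lemma Dpart_contDiff {f : ℝ × ℝ → ℝ} (hf : ContDiff ℝ (⊤ : ℕ∞) f) (k : ℕ) :
    ContDiff ℝ (⊤ : ℕ∞) (Dpart f k) := by
  induction k with
  | zero =>
      have : Dpart f 0 = f := by
        funext x; simp [Dpart]
      rw [this]; exact hf
  | succ k IH =>
      have hu : ContDiff ℝ (⊤ : ℕ∞)
          (Function.uncurry fun (x : ℝ × ℝ) (p' : ℝ) => Dpart f k (p', x.2)) := by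
        apply IH.comp
        exact contDiff_snd.prodMk (contDiff_snd.comp contDiff_fst)
      have h2 : ContDiff ℝ (⊤ : ℕ∞)
          (fun x : ℝ × ℝ => fderiv ℝ (fun p' => Dpart f k (p', x.2)) x.1) :=
        ContDiff.fderiv hu contDiff_fst (by simp)
      have h3 := h2.clm_apply (contDiff_const (c := (1 : ℝ)))
      have : Dpart f (k + 1) =
          fun x : ℝ × ℝ => fderiv ℝ (fun p' => Dpart f k (p', x.2)) x.1 1 := by
        funext x
        simp only [Dpart, iteratedDeriv_succ]
        rw [fderiv_apply_one_eq_deriv]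
      rw [this]; exact h3

lemma Dpart_inv {f : ℝ × ℝ → ℝ}
    (hinv : ∀ (n : ℤ) (p q : ℝ), f (p + n * q, q) = f (p, q))
    (k : ℕ) (n : ℤ) (p q : ℝ) : Dpart f k (p + n * q, q) = Dpart f k (p, q) := by
  have h1 : (fun p' : ℝ => f (p' + n * q, q)) = fun p' : ℝ => f (p', q) :=
    funext fun p' => hinv n p' q
  have h2 := congrFun (iteratedDeriv_comp_add_const k (fun p' : ℝ => f (p', q)) (n * q)) p
  simp only [Dpart]
  rw [← h2, h1]

/-- `f (·, 0)` is constant. -/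
lemma slice_const {f : ℝ × ℝ → ℝ} (hf : ContDiff ℝ (⊤ : ℕ∞) f)
    (hinv : ∀ (n : ℤ) (p q : ℝ), f (p + n * q, q) = f (p, q))
    (p p' : ℝ) : f (p', 0) = f (p, 0) := by
  set qn : ℕ → ℝ := fun n => (p' - p) / ((n : ℝ) + 1) with hqn
  have t0 : Tendsto qn atTop (𝓝 0) := by
    have := (tendsto_const_div_atTop_nhds_zero_nat (p' - p)).comp
      (tendsto_add_atTop_nat 1)
    simpa [qn, Function.comp_def, Nat.cast_add, add_comm] using this
  have key : ∀ n : ℕ, f (p', qn n) = f (p, qn n) := by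
    intro n
    have h := hinv ((n : ℤ) + 1) p (qn n)
    have e : p + (((n : ℤ) + 1 : ℤ) : ℝ) * qn n = p' := by
      push_cast
      have : ((n : ℝ) + 1) ≠ 0 := by positivity
      simp only [hqn]
      rw [mul_div_assoc', mul_div_cancel_left₀ _ this]
      ring
    rwa [e] at h
  have c1 : Tendsto (fun n => f (p', qn n)) atTop (𝓝 (f (p', 0))) :=
    (hf.continuous.tendsto (p', 0)).comp (tendsto_const_nhds.prodMk_nhds t0)
  have c2 : Tendsto (fun n => f (p, qn n)) atTop (𝓝 (f (p, 0))) :=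
    (hf.continuous.tendsto (p, 0)).comp (tendsto_const_nhds.prodMk_nhds t0)
  exact tendsto_nhds_unique (c1.congr fun n => key n) c2

lemma Dpart_zero_line {f : ℝ × ℝ → ℝ} (hf : ContDiff ℝ (⊤ : ℕ∞) f)
    (hinv : ∀ (n : ℤ) (p q : ℝ), f (p + n * q, q) = f (p, q))
    {k : ℕ} (hk : 1 ≤ k) (x : ℝ) : Dpart f k (x, 0) = 0 := by
  obtain ⟨k, rfl⟩ : ∃ k', k = k' + 1 := ⟨k - 1, (Nat.succ_pred_eq_of_pos hk).symm⟩
  have hconst : (fun p' : ℝ => f (p', 0)) = fun _ : ℝ => f (x, 0) :=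
    funext fun p' => slice_const hf hinv x p'
  simp only [Dpart, hconst]
  rw [iteratedDeriv_eq_iteratedFDeriv, iteratedFDeriv_const_of_ne (Nat.succ_ne_zero k)]
  simp

/-- Rolle-type zero for `Dpart f k (·, q)` near any point, for `k ≥ 1`, `q ≠ 0`. -/
lemma Dpart_exists_zero {f : ℝ × ℝ → ℝ} (hf : ContDiff ℝ (⊤ : ℕ∞) f)
    (hinv : ∀ (n : ℤ) (p q : ℝ), f (p + n * q, q) = f (p, q))
    {k : ℕ} (hk : 1 ≤ k) (x q : ℝ) (hq : q ≠ 0) :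
    ∃ ξ : ℝ, |ξ - x| ≤ |q| ∧ Dpart f k (ξ, q) = 0 := by
  obtain ⟨k, rfl⟩ : ∃ k', k = k' + 1 := ⟨k - 1, (Nat.succ_pred_eq_of_pos hk).symm⟩
  set g : ℝ → ℝ := fun y => Dpart f k (y, q) with hg_def
  have hg : ContDiff ℝ (⊤ : ℕ∞) g :=
    (Dpart_contDiff hf k).comp (contDiff_id.prodMk contDiff_const)
  have hper : g (x + q) = g x := by
    have := Dpart_inv hinv k 1 x q
    simpa using this
  have hderiv : ∀ y, deriv g y = Dpart f (k + 1) (y, q) := fun y => Dpart_deriv f k q y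
  rcases lt_or_gt_of_ne hq with hneg | hpos
  · -- q < 0 : interval [x+q, x]
    obtain ⟨c, hc, hc0⟩ := exists_deriv_eq_zero (f := g)
      (show x + q < x by linarith) hg.continuous.continuousOn hper
    refine ⟨c, ?_, by rw [← hderiv c]; exact hc0⟩
    rw [abs_of_neg hneg]
    rcases hc with ⟨h1, h2⟩
    rw [abs_le]; constructor <;> linarith
  · -- q > 0 : interval [x, x+q]
    obtain ⟨c, hc, hc0⟩ := exists_deriv_eq_zero (f := g)
      (show x < x + q by linarith) hg.continuous.continuousOn hper.symm
    refine ⟨c, ?_, by rw [← hderiv c]; exact hc0⟩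
    rw [abs_of_pos hpos]
    rcases hc with ⟨h1, h2⟩
    rw [abs_le]; constructor <;> linarith

/-- Uniform local bound: `|∂_p^k f (x, q)| ≤ C |q|^m` for `k ≥ 1`. -/
lemma Dpart_bound {f : ℝ × ℝ → ℝ} (hf : ContDiff ℝ (⊤ : ℕ∞) f)
    (hinv : ∀ (n : ℤ) (p q : ℝ), f (p + n * q, q) = f (p, q)) :
    ∀ (m k : ℕ), 1 ≤ k → ∀ p : ℝ, ∃ C r : ℝ, 0 < r ∧ 0 ≤ C ∧
      ∀ x q : ℝ, |x - p| ≤ r → |q| ≤ r → |Dpart f k (x, q)| ≤ C * |q| ^ m := by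
  intro m
  induction m with
  | zero =>
      intro k hk p
      obtain ⟨C, hC⟩ := (isCompact_closedBall ((p, 0) : ℝ × ℝ) 1).exists_bound_of_continuousOn
        (Dpart_contDiff hf k).continuous.continuousOn
      have hC0 : 0 ≤ C := le_trans (norm_nonneg _) (hC (p, 0) (Metric.mem_closedBall_self zero_le_one))
      refine ⟨C, 1, one_pos, hC0, fun x q hx hq => ?_⟩
      have hmem : ((x, q) : ℝ × ℝ) ∈ Metric.closedBall ((p, 0) : ℝ × ℝ) 1 := by
        rw [Metric.mem_closedBall, Prod.dist_eq]
        simp only [Real.dist_eq, sub_zero]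
        exact max_le hx hq
      simpa using hC (x, q) hmem
  | succ m IH =>
      intro k hk p
      obtain ⟨C, r, hr, hC0, hb⟩ := IH (k + 1) (Nat.le_succ_of_le hk) p
      refine ⟨C, r / 2, by linarith, hC0, fun x q hx hq => ?_⟩
      rcases eq_or_ne q 0 with rfl | hq0
      · rw [Dpart_zero_line hf hinv hk x]
        simp
      · obtain ⟨ξ, hξ, hξ0⟩ := Dpart_exists_zero hf hinv hk x q hq0
        set g : ℝ → ℝ := fun y => Dpart f k (y, q) with hg_def
        have hgd : ContDiff ℝ (⊤ : ℕ∞) g :=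
          (Dpart_contDiff hf k).comp (contDiff_id.prodMk contDiff_const)
        have hderiv : ∀ y, deriv g y = Dpart f (k + 1) (y, q) := fun y => Dpart_deriv f k q y
        have hx' := abs_le.mp hx
        have hξ' := abs_le.mp hξ
        have hxs : x ∈ Icc (p - r) (p + r) :=
          Set.mem_Icc.mpr ⟨by linarith [hx'.1], by linarith [hx'.2]⟩
        have hξs : ξ ∈ Icc (p - r) (p + r) :=
          Set.mem_Icc.mpr ⟨by linarith [hξ'.1, hx'.1, hq], by linarith [hξ'.2, hx'.2, hq]⟩
        have key :=
          Convex.norm_image_sub_le_of_norm_deriv_le (f := g) (C := C * |q| ^ m)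
            (s := Icc (p - r) (p + r))
            (fun y _ => (hgd.differentiable (by simp)).differentiableAt)
            (fun y hy => by
              rw [hderiv y, Real.norm_eq_abs]
              refine hb y q ?_ (by linarith)
              rw [mem_Icc] at hy
              rw [abs_le]; constructor <;> linarith)
            (convex_Icc _ _) hξs hxs
        have : |g x| ≤ C * |q| ^ m * |x - ξ| := by
          simpa [hg_def, hξ0, Real.norm_eq_abs] using key
        calc |Dpart f k (x, q)| = |g x| := rfl
          _ ≤ C * |q| ^ m * |x - ξ| := this
          _ ≤ C * |q| ^ m * |q| := by
              apply mul_le_mul_of_nonneg_left _ (by positivity)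
              rwa [abs_sub_comm] at hξ
          _ = C * |q| ^ (m + 1) := by ring

/-- Auxiliary: for smooth functions on ℝ, `iteratedDerivWithin = iteratedDeriv`
on sets of unique differentiability. -/
lemma iteratedDerivWithin_eq_iteratedDeriv_of_contDiff {φ : ℝ → ℝ}
    (hφ : ContDiff ℝ (⊤ : ℕ∞) φ) {s : Set ℝ} (hs : UniqueDiffOn ℝ s) {x : ℝ}
    (hx : x ∈ s) (n : ℕ) : iteratedDerivWithin n φ s x = iteratedDeriv n φ x := by
  have h := (contDiff_iff_ftaylorSeries.mp hφ).hasFTaylorSeriesUpToOn s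
  rw [iteratedDerivWithin_eq_iteratedFDerivWithin, iteratedDeriv_eq_iteratedFDeriv,
    ← h.eq_iteratedFDerivWithin_of_uniqueDiffOn (by exact_mod_cast le_top) hs hx]
  rfl

/-- A smooth function which vanishes to infinite order at `0` has all
iterated derivatives zero at `0`. -/
lemma flat_iteratedDeriv_zero {g : ℝ → ℝ} (hg : ContDiff ℝ (⊤ : ℕ∞) g)
    (hb : ∀ m : ℕ, ∃ C r : ℝ, 0 < r ∧ 0 ≤ C ∧ ∀ q : ℝ, |q| ≤ r → |g q| ≤ C * |q| ^ m) :
    ∀ j : ℕ, iteratedDeriv j g 0 = 0 := by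
  intro j
  induction j using Nat.strong_induction_on with
  | _ j IH =>
    match j, IH with
    | 0, _ =>
        obtain ⟨C, r, hr, hC0, hb1⟩ := hb 1
        have h1 := hb1 0 (by simp [hr.le])
        simp only [abs_zero, pow_one, mul_zero] at h1
        have h2 : |g 0| = 0 := le_antisymm h1 (abs_nonneg _)
        simpa [iteratedDeriv_zero] using abs_eq_zero.mp h2
    | (jj + 1), IH =>
        obtain ⟨C, r, hr, hC0, hbj⟩ := hb (jj + 2)
        set ψ : ℝ → ℝ := iteratedDeriv (jj + 1) g with hψ
        have hψc : Continuous ψ := hg.continuous_iteratedDeriv (jj + 1) (by exact_mod_cast le_top)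
        have key : ∀ q : ℝ, 0 < q → q ≤ r →
            ∃ x', x' ∈ Ioo (0 : ℝ) q ∧
              |ψ x'| ≤ C * (Nat.factorial (jj + 1) : ℝ) * q := by
          intro q hq hqr
          have hud : UniqueDiffOn ℝ (Icc (0 : ℝ) q) := uniqueDiffOn_Icc hq
          obtain ⟨x', hx', heq⟩ := taylor_mean_remainder_lagrange (f := g) (x₀ := 0) (x := q)
            (n := jj) hq.ne ((hg.of_le (by exact_mod_cast le_top)).contDiffOn)
            (by
              rw [Set.uIcc_of_le hq.le, Set.uIoo_of_le hq.le]
              apply DifferentiableOn.congr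
                (f := iteratedDeriv jj g)
                ((((hg.of_le (show ((jj+1:ℕ) : WithTop ℕ∞) ≤ ((⊤:ℕ∞) : WithTop ℕ∞) by
                    exact_mod_cast le_top)).differentiable_iteratedDeriv jj
                  (by exact_mod_cast Nat.lt_succ_self jj))).differentiableOn)
              intro y hy
              exact iteratedDerivWithin_eq_iteratedDeriv_of_contDiff hg hud
                (Ioo_subset_Icc_self hy) jj)
          rw [Set.uIcc_of_le hq.le] at heq
          rw [Set.uIoo_of_le hq.le] at hx'
          have htay : taylorWithinEval g jj (Icc 0 q) 0 q = 0 := by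
            rw [taylor_within_apply]
            apply Finset.sum_eq_zero
            intro k hk
            rw [iteratedDerivWithin_eq_iteratedDeriv_of_contDiff hg hud
              (left_mem_Icc.mpr hq.le) k, IH k (by
                rw [Finset.mem_range] at hk
                omega)]
            simp
          rw [htay, sub_zero, sub_zero] at heq
          rw [iteratedDerivWithin_eq_iteratedDeriv_of_contDiff hg hud
            (Ioo_subset_Icc_self hx') (jj + 1)] at heq
          refine ⟨x', hx', ?_⟩
          have hqj : (0 : ℝ) < q ^ (jj + 1) := by positivity
          have hfac : (0 : ℝ) < (Nat.factorial (jj + 1) : ℝ) := by positivity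
          have habs : |g q| = |ψ x'| * q ^ (jj + 1) / (Nat.factorial (jj + 1) : ℝ) := by
            rw [heq, abs_div, abs_mul, abs_of_pos hqj, Nat.abs_cast]
          have hbound := hbj q (by rwa [abs_of_pos hq])
          rw [abs_of_pos hq, habs] at hbound
          rw [div_le_iff₀ hfac] at hbound
          have h2 : |ψ x'| * q ^ (jj + 1) ≤
              C * (Nat.factorial (jj + 1) : ℝ) * q * q ^ (jj + 1) := by
            calc |ψ x'| * q ^ (jj + 1) ≤ C * q ^ (jj + 2) * (Nat.factorial (jj + 1) : ℝ) :=
                  hbound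
              _ = C * (Nat.factorial (jj + 1) : ℝ) * q * q ^ (jj + 1) := by ring
          exact le_of_mul_le_mul_right h2 hqj
        by_contra h0
        have hε : 0 < |ψ 0| := abs_pos.mpr h0
        obtain ⟨δ, hδ, hδ'⟩ := Metric.continuousAt_iff.mp (hψc.continuousAt (x := 0))
          (|ψ 0| / 2) (by linarith)
        set q : ℝ := min (δ / 2) (min r (|ψ 0| / (2 * (C * (Nat.factorial (jj + 1) : ℝ) + 1))))
          with hqdef
        have hq0 : 0 < q := lt_min (by linarith) (lt_min hr (by positivity))
        obtain ⟨x', hx', hxb⟩ := key q hq0 (le_trans (min_le_right _ _) (min_le_left _ _))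
        have hx'δ : dist x' 0 < δ := by
          rw [Real.dist_eq, sub_zero, abs_of_pos hx'.1]
          calc x' < q := hx'.2
            _ ≤ δ / 2 := min_le_left _ _
            _ < δ := by linarith
        have hclose := hδ' hx'δ
        rw [Real.dist_eq] at hclose
        have hlow : |ψ 0| / 2 < |ψ x'| := by
          have h3 := abs_sub_abs_le_abs_sub (ψ 0) (ψ x')
          rw [abs_sub_comm] at hclose
          linarith
        have hupp : |ψ x'| ≤ |ψ 0| / 2 := by
          have hq2 : q ≤ |ψ 0| / (2 * (C * (Nat.factorial (jj + 1) : ℝ) + 1)) :=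
            le_trans (min_le_right _ _) (min_le_right _ _)
          have hfacpos : (0 : ℝ) < (Nat.factorial (jj + 1) : ℝ) := by positivity
          calc |ψ x'| ≤ C * (Nat.factorial (jj + 1) : ℝ) * q := hxb
            _ ≤ (C * (Nat.factorial (jj + 1) : ℝ) + 1) * q := by nlinarith
            _ ≤ (C * (Nat.factorial (jj + 1) : ℝ) + 1) *
                (|ψ 0| / (2 * (C * (Nat.factorial (jj + 1) : ℝ) + 1))) := by
                apply mul_le_mul_of_nonneg_left hq2 (by positivity)
            _ = |ψ 0| / 2 := by
                have hne : C * (Nat.factorial (jj + 1) : ℝ) + 1 ≠ 0 := by positivity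
                field_simp
        linarith

/-- For a smooth `G`-invariant function `f` on `ℝ²` (where `G ≅ ℤ` acts by
`n·(p,q) = (p+nq,q)`), every mixed partial derivative `∂^{i+j} f/∂p^i ∂q^j`
with `i ≥ 1` vanishes at every point of the line `q = 0`. -/
theorem stmt0 (f : ℝ × ℝ → ℝ) (hf : ContDiff ℝ (⊤ : ℕ∞) f)
    (hinv : ∀ (n : ℤ) (p q : ℝ), f (p + n * q, q) = f (p, q)) :
    ∀ (i j : ℕ), 1 ≤ i → ∀ p : ℝ,
      iteratedDeriv j (fun q : ℝ =>
        iteratedDeriv i (fun p' : ℝ => f (p', q)) p) 0 = 0 := by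
  intro i j hi p
  have hφ : ContDiff ℝ (⊤ : ℕ∞) (fun q : ℝ => Dpart f i (p, q)) :=
    (Dpart_contDiff hf i).comp (contDiff_const.prodMk contDiff_id)
  have hb : ∀ m : ℕ, ∃ C r : ℝ, 0 < r ∧ 0 ≤ C ∧
      ∀ q : ℝ, |q| ≤ r → |Dpart f i (p, q)| ≤ C * |q| ^ m := by
    intro m
    obtain ⟨C, r, hr, hC0, hbb⟩ := Dpart_bound hf hinv m i hi p
    exact ⟨C, r, hr, hC0, fun q hq => hbb p q (by simp [hr.le]) hq⟩
  exact flat_iteratedDeriv_zero hφ hb j
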